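/- (Primitive cycle product formula) For an n×n matrix A (as a formal power series identity, or for sufficiently small A), det(I - A) = Π_{γ_ρ ∈ Γ_ρ} (1 - w_1(γ_ρ)), where Γ_ρ is the set of non-isomorphic primitive (aperiodic) labeled cycle graphs with vertex labels in {1,...,n} and w_1(γ_ρ) is the product of the edge weights A_{ij} over the edges of γ_ρ. -/

import Mathlib

open scoped Classical

noncomputable section

/-- A labeled cycle graph of length `t+1` (`f : ZMod (t+1) → Fin n`) is
primitive (aperiodic) if no nontrivial rotation preserves all labels. -/
def IsPrimitiveCycle {t n : ℕ} (f : ZMod (t + 1) → Fin n) : Prop :=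
  ∀ c : ZMod (t + 1), (∀ i, f (i + c) = f i) → c = 0

/-- The weight `w₁` of a labeled cycle graph: the product of the edge weights. -/
def cycWeight {t n : ℕ} (A : Matrix (Fin n) (Fin n) ℝ) (f : ZMod (t + 1) → Fin n) : ℝ :=
  ∏ i : ZMod (t + 1), A (f i) (f (i + 1))

open Polynomial Matrix

section TracePart
variable {n : ℕ} (A : Matrix (Fin n) (Fin n) ℝ)

/-- weight of a path x → f 0 → ... → f (k-1) → y -/
def wk : (k : ℕ) → (x y : Fin n) → (Fin k → Fin n) → ℝ
  | 0, x, y, _ => A x y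
  | (k+1), x, y, f => A x (f 0) * wk k (f 0) y (f ∘ Fin.succ)

lemma pow_apply_wk (k : ℕ) (x y : Fin n) :
    (A^(k+1)) x y = ∑ f : Fin k → Fin n, wk A k x y f := by
  induction k generalizing x y with
  | zero => simp [wk, Fintype.sum_unique]
  | succ k ih =>
      rw [pow_succ']
      rw [Matrix.mul_apply]
      simp_rw [ih]
      rw [← Equiv.sum_comp (Fin.consEquiv (fun _ : Fin (k+1) => Fin n))]
      rw [Fintype.sum_prod_type]
      apply Finset.sum_congr rfl
      intro z _
      rw [Finset.mul_sum]
      apply Finset.sum_congr rfl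
      intro f _
      have h1 : (Fin.cons z f : Fin (k+1) → Fin n) ∘ Fin.succ = f := by
        funext j; simp
      simp [wk, Fin.consEquiv, h1]

lemma wk_eq_prod (k : ℕ) (x y : Fin n) (f : Fin k → Fin n) :
    wk A k x y f = ∏ i : Fin (k+1),
      A ((Fin.cons x f : Fin (k+1) → Fin n) i) ((Fin.snoc f y : Fin (k+1) → Fin n) i) := by
  induction k generalizing x with
  | zero =>
      rw [wk]
      rw [Fin.prod_univ_one]
      rw [Fin.cons_zero]
      rw [show ((0 : Fin 1)) = Fin.last 0 from rfl, Fin.snoc_last]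
  | succ k ih =>
      conv_rhs => rw [Fin.prod_univ_succ]
      rw [wk, ih (f 0) (f ∘ Fin.succ)]
      have htail : (f ∘ Fin.succ) = Fin.tail f := rfl
      congr 1
      · refine Finset.prod_congr rfl fun i _ => ?_
        rw [htail, Fin.cons_self_tail, Fin.cons_succ]
        congr 1
        induction i using Fin.lastCases with
        | last =>
            rw [Fin.snoc_last, Fin.succ_last, Fin.snoc_last]
        | cast j =>
            rw [Fin.snoc_castSucc, Fin.succ_castSucc, Fin.snoc_castSucc, Fin.tail]


lemma zmod_val_succ_eq {k : ℕ} (i : ZMod (k+1)) : (i + 1 : ZMod (k+1)).val = (i.val + 1) % (k+1) := by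
  rw [ZMod.val_add, ZMod.val_one_eq_one_mod]
  conv_rhs => rw [Nat.add_mod]
  conv_lhs => rw [Nat.add_mod, Nat.mod_mod_of_dvd _ (dvd_refl _)]

lemma cyc_eq_wk (k : ℕ) (F : ZMod (k+1) → Fin n) :
    cycWeight A F = wk A k (F 0) (F 0) (fun j : Fin k => F (Fin.succ j : Fin (k+1))) := by
  rw [wk_eq_prod]
  set tl : Fin k → Fin n := fun j : Fin k => F (Fin.succ j : Fin (k+1)) with htl
  have hcons : (Fin.cons (F 0) tl : Fin (k+1) → Fin n) = (F : Fin (k+1) → Fin n) := by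
    funext i
    induction i using Fin.cases with
    | zero => rw [Fin.cons_zero]; rfl
    | succ j => rw [Fin.cons_succ]
  show (∏ i : ZMod (k+1), A (F i) (F (i + 1))) = _
  refine Fintype.prod_equiv (Equiv.refl (Fin (k+1)) : Fin (k+1) ≃ ZMod (k+1)) _ _ fun i => ?_
  rw [hcons]
  simp only [Equiv.refl_apply]
  congr 1
  induction i using Fin.lastCases with
  | last =>
      have h1 : (Fin.snoc tl (F 0) : Fin (k+1) → Fin n) (Fin.last k) = F 0 := Fin.snoc_last _ _
      rw [h1]
      congr 1
      apply ZMod.val_injective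
      erw [zmod_val_succ_eq]
      show (k + 1) % (k + 1) = (0 : ZMod (k+1)).val
      rw [Nat.mod_self, ZMod.val_zero]
  | cast j =>
      have h1 : (Fin.snoc tl (F 0) : Fin (k+1) → Fin n) (Fin.castSucc j) = tl j :=
        Fin.snoc_castSucc _ _ _
      rw [h1, htl]
      congr 1
      apply ZMod.val_injective
      erw [zmod_val_succ_eq]
      show (j.val + 1) % (k + 1) = (Fin.succ j).val
      rw [Fin.val_succ, Nat.mod_eq_of_lt (Nat.succ_lt_succ j.isLt)]

lemma trace_pow (k : ℕ) :
    (A^(k+1)).trace = ∑ F : ZMod (k+1) → Fin n, cycWeight A F := by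
  have h0 : (∑ F : ZMod (k+1) → Fin n, cycWeight A F)
      = ∑ F : Fin (k+1) → Fin n, cycWeight A (F : ZMod (k+1) → Fin n) :=
    Fintype.sum_equiv (Equiv.refl _) _ _ (fun _ => rfl)
  rw [h0]
  rw [← Equiv.sum_comp (Fin.consEquiv (fun _ : Fin (k+1) => Fin n))
    (fun F : Fin (k+1) → Fin n => cycWeight A (F : ZMod (k+1) → Fin n))]
  rw [Fintype.sum_prod_type, Matrix.trace]
  refine Finset.sum_congr rfl fun x _ => ?_
  rw [Matrix.diag, pow_apply_wk]
  refine Finset.sum_congr rfl fun f _ => ?_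
  erw [cyc_eq_wk]
  simp only [Fin.consEquiv_apply]
  have h1 : (Fin.cons x f : Fin (k+1) → Fin n) (0 : ZMod (k+1)) = x := Fin.cons_zero _ _
  have h2 : (fun j : Fin k => (Fin.cons x f : Fin (k+1) → Fin n) (Fin.succ j : Fin (k+1))) = f := by
    funext j; exact Fin.cons_succ _ _ _
  show _ = wk A k ((Fin.cons x f : Fin (k+1) → Fin n) (0 : ZMod (k+1))) ((Fin.cons x f : Fin (k+1) → Fin n) (0 : ZMod (k+1)))
    (fun j : Fin k => (Fin.cons x f : Fin (k+1) → Fin n) (Fin.succ j : Fin (k+1)))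
  rw [h1, h2]

end TracePart

/-- cast of a natural number mod `b` into `ZMod (m+1)` when `(m+1) ∣ b`. -/
lemma cast_mod (m b a : ℕ) (h : (m+1) ∣ b) : ((a % b : ℕ) : ZMod (m+1)) = (a : ZMod (m+1)) := by
  conv_rhs => rw [← Nat.div_add_mod a b]
  rw [Nat.cast_add, Nat.cast_mul, (ZMod.natCast_eq_zero_iff b (m+1)).2 h, zero_mul,
    zero_add]

lemma natCast_val_self {m : ℕ} (i : ZMod (m+1)) : ((i.val : ℕ) : ZMod (m+1)) = i := by
  rw [ZMod.natCast_val, ZMod.cast_id]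

section Period
variable {n t : ℕ}

/-- `d : ℕ` is a period of the cycle `f`. -/
def perN (f : ZMod (t+1) → Fin n) (d : ℕ) : Prop :=
  ∀ i, f (i + (d : ZMod (t+1))) = f i

lemma perN_add {f : ZMod (t+1) → Fin n} {a b : ℕ} (ha : perN f a) (hb : perN f b) :
    perN f (a + b) := by
  intro i
  rw [Nat.cast_add, ← add_assoc]
  rw [hb (i + (a : ZMod (t+1))), ha i]

lemma perN_mul {f : ZMod (t+1) → Fin n} {a : ℕ} (ha : perN f a) (q : ℕ) : perN f (q * a) := by
  induction q with
  | zero => intro i; simp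
  | succ q ih =>
      have : (q + 1) * a = q * a + a := by ring
      rw [this]
      exact perN_add ih ha

lemma perN_len (f : ZMod (t+1) → Fin n) : perN f (t+1) := by
  intro i; rw [ZMod.natCast_self, add_zero]

lemma perN_exists (f : ZMod (t+1) → Fin n) : ∃ d, 0 < d ∧ perN f d :=
  ⟨t+1, Nat.succ_pos t, perN_len f⟩

/-- minimal positive period -/
def minPer (f : ZMod (t+1) → Fin n) : ℕ := Nat.find (perN_exists f)

lemma minPer_pos (f : ZMod (t+1) → Fin n) : 0 < minPer f := (Nat.find_spec (perN_exists f)).1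

lemma minPer_perN (f : ZMod (t+1) → Fin n) : perN f (minPer f) := (Nat.find_spec (perN_exists f)).2

lemma minPer_dvd {f : ZMod (t+1) → Fin n} {d : ℕ} (hd : perN f d) : minPer f ∣ d := by
  set ℓ := minPer f with hℓ
  have hpos : 0 < ℓ := minPer_pos f
  have hper : perN f ℓ := minPer_perN f
  have hq : perN f (ℓ * (d / ℓ)) := by
    have := perN_mul hper (d / ℓ); rwa [Nat.mul_comm] at this
  have hr : perN f (d % ℓ) := by
    intro i
    have h1 : d % ℓ + ℓ * (d / ℓ) = d := Nat.mod_add_div d ℓ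
    calc f (i + ((d % ℓ : ℕ) : ZMod (t+1)))
        = f ((i + ((d % ℓ : ℕ) : ZMod (t+1))) + ((ℓ * (d / ℓ) : ℕ) : ZMod (t+1))) := (hq _).symm
      _ = f (i + ((d % ℓ + ℓ * (d / ℓ) : ℕ) : ZMod (t+1))) := by rw [Nat.cast_add, add_assoc]
      _ = f (i + ((d : ℕ) : ZMod (t+1))) := by rw [h1]
      _ = f i := hd i
  by_contra hcon
  have hr0 : d % ℓ ≠ 0 := fun h0 => hcon (Nat.dvd_of_mod_eq_zero h0)
  have hlt : d % ℓ < ℓ := Nat.mod_lt d hpos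
  exact Nat.find_min (perN_exists f) hlt ⟨Nat.pos_of_ne_zero hr0, hr⟩

lemma minPer_dvd_len (f : ZMod (t+1) → Fin n) : minPer f ∣ (t+1) := minPer_dvd (perN_len f)

lemma stab_iff_perN {f : ZMod (t+1) → Fin n} (c : ZMod (t+1)) :
    (∀ i, f (i + c) = f i) ↔ perN f c.val := by
  unfold perN
  rw [natCast_val_self c]

end Period

section Proj
variable {n : ℕ} (t s u : ℕ)

/-- projection `ZMod (t+1) → ZMod (s+1)` -/
def pr (i : ZMod (t+1)) : ZMod (s+1) := (i.val : ZMod (s+1))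

variable {t s u}


lemma pr_natCast (hk : t + 1 = (s + 1) * (u + 1)) (a : ℕ) : pr t s ((a : ZMod (t+1))) = (a : ZMod (s+1)) := by
  unfold pr
  rw [ZMod.val_natCast, cast_mod s (t+1) a ⟨u+1, hk⟩]

lemma pr_add (hk : t + 1 = (s + 1) * (u + 1)) (i j : ZMod (t+1)) : pr t s (i + j) = pr t s i + pr t s j := by
  unfold pr
  rw [ZMod.val_add, cast_mod s (t+1) _ ⟨u+1, hk⟩, Nat.cast_add]

lemma pr_one (hk : t + 1 = (s + 1) * (u + 1)) : pr t s (1 : ZMod (t+1)) = 1 := by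
  have h1 : ((1 : ℕ) : ZMod (t+1)) = 1 := Nat.cast_one
  rw [← h1, pr_natCast hk, Nat.cast_one]

lemma pr_val_cast (hk : t + 1 = (s + 1) * (u + 1)) (j : ZMod (s+1)) : pr t s ((j.val : ZMod (t+1))) = j := by
  rw [pr_natCast hk, natCast_val_self]

lemma pr_len (hk : t + 1 = (s + 1) * (u + 1)) : pr t s (((s+1 : ℕ)) : ZMod (t+1)) = 0 := by
  rw [pr_natCast hk, ZMod.natCast_self]

/-- `ZMod (t+1) ≃ ZMod (s+1) × Fin (u+1)` adapted to a shift `c`. -/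
def zEquiv (hk : t + 1 = (s + 1) * (u + 1)) (c : ZMod (s+1)) : ZMod (t+1) ≃ ZMod (s+1) × Fin (u+1) where
  toFun i := (pr t s i + c, ⟨i.val / (s+1), by
    have h1 : i.val < (s+1) * (u+1) := hk ▸ ZMod.val_lt i
    rw [Nat.div_lt_iff_lt_mul (Nat.succ_pos s)]
    rw [Nat.mul_comm]
    exact h1⟩)
  invFun p := ((((p.1 - c).val + (s+1) * p.2.val : ℕ)) : ZMod (t+1))
  left_inv i := by
    simp only [add_sub_cancel_right]
    have h2 : (pr t s i).val = i.val % (s+1) := ZMod.val_natCast _ _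
    rw [h2, Nat.mod_add_div]
    exact natCast_val_self i
  right_inv p := by
    obtain ⟨j, a⟩ := p
    have hval : (j - c).val + (s+1) * a.val < t + 1 := by
      have h1 : (j - c).val < s + 1 := ZMod.val_lt _
      have h2 : a.val < u + 1 := a.isLt
      rw [hk]
      nlinarith
    have hv : (((((j - c).val + (s+1) * a.val : ℕ)) : ZMod (t+1))).val
        = (j - c).val + (s+1) * a.val := by
      rw [ZMod.val_natCast, Nat.mod_eq_of_lt hval]
    refine Prod.ext ?_ ?_
    · show pr t s _ + c = j
      rw [pr_natCast hk, Nat.cast_add, Nat.cast_mul, ZMod.natCast_self, zero_mul, add_zero,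
        natCast_val_self, sub_add_cancel]
    · apply Fin.ext
      show (((((j - c).val + (s+1) * a.val : ℕ)) : ZMod (t+1))).val / (s+1) = a.val
      rw [hv, Nat.add_mul_div_left _ _ (Nat.succ_pos s), Nat.div_eq_of_lt (ZMod.val_lt _),
        zero_add]

/-- pullback of a cycle along `pr` with a rotation `c` -/
def pullCyc (g : ZMod (s+1) → Fin n) (c : ZMod (s+1)) : ZMod (t+1) → Fin n :=
  fun i => g (pr t s i + c)

lemma weight_pullCyc (hk : t + 1 = (s + 1) * (u + 1)) (A : Matrix (Fin n) (Fin n) ℝ) (g : ZMod (s+1) → Fin n) (c : ZMod (s+1)) :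
    cycWeight A (pullCyc (t := t) g c) = (cycWeight A g)^(u+1) := by
  unfold cycWeight pullCyc
  have h1 : ∀ i : ZMod (t+1), g (pr t s (i+1) + c) = g ((pr t s i + c) + 1) := by
    intro i
    rw [pr_add hk, pr_one hk]
    ring_nf
  calc (∏ i : ZMod (t+1), A (g (pr t s i + c)) (g (pr t s (i+1) + c)))
      = ∏ i : ZMod (t+1), (fun j => A (g j) (g (j+1))) ((zEquiv hk c) i).1 := by
        refine Finset.prod_congr rfl fun i _ => ?_
        rw [h1 i]
        rfl
    _ = ∏ p : ZMod (s+1) × Fin (u+1), (fun j => A (g j) (g (j+1))) p.1 :=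
        Fintype.prod_equiv (zEquiv hk c) _ _ (fun i => rfl)
    _ = ∏ j : ZMod (s+1), (A (g j) (g (j+1)))^(u+1) := by
        rw [Fintype.prod_prod_type]
        refine Finset.prod_congr rfl fun j _ => ?_
        simp [Finset.prod_const, Finset.card_univ]
    _ = (∏ j : ZMod (s+1), A (g j) (g (j+1)))^(u+1) := by rw [← Finset.prod_pow]

lemma minPer_pullCyc (hk : t + 1 = (s + 1) * (u + 1)) {g : ZMod (s+1) → Fin n} (hg : IsPrimitiveCycle g) (c : ZMod (s+1)) :
    minPer (pullCyc (t := t) g c) = s + 1 := by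
  set f := pullCyc (t := t) g c with hf
  have hper : perN f (s+1) := by
    intro i
    show g (pr t s (i + ((s+1 : ℕ) : ZMod (t+1))) + c) = g (pr t s i + c)
    rw [pr_add hk, pr_len hk, add_zero]
  have hdvd : minPer f ∣ s + 1 := minPer_dvd hper
  have hle : minPer f ≤ s + 1 := Nat.le_of_dvd (Nat.succ_pos s) hdvd
  rcases Nat.lt_or_ge (minPer f) (s+1) with hlt | hge
  · exfalso
    -- small positive period d gives nontrivial stabilizer of g
    set d := minPer f with hd
    have hdpos : 0 < d := minPer_pos f
    have hdper : perN f d := minPer_perN f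
    have hstab : ∀ j : ZMod (s+1), g (j + (d : ZMod (s+1))) = g j := by
      intro j
      have hi := hdper (((j - c).val : ZMod (t+1)))
      show _ = g j
      have h2 : pr t s (((j - c).val : ZMod (t+1))) = j - c := pr_val_cast hk _
      have h3 : pr t s ((((j - c).val : ZMod (t+1))) + (d : ZMod (t+1)))
          = (j - c) + (d : ZMod (s+1)) := by
        rw [pr_add hk, h2, pr_natCast hk]
      unfold f at hi
      unfold pullCyc at hi
      rw [h3, h2] at hi
      calc g (j + (d : ZMod (s+1))) = g ((j - c) + (d : ZMod (s+1)) + c) := by ring_nf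
        _ = g ((j - c) + c) := hi
        _ = g j := by rw [sub_add_cancel]
    have hz : ((d : ℕ) : ZMod (s+1)) = 0 := hg _ hstab
    have : (s+1) ∣ d := (ZMod.natCast_eq_zero_iff d (s+1)).1 hz
    have := Nat.le_of_dvd hdpos this
    omega
  · omega

/-- the primitive root cycle of `f` (when `s+1 = minPer f`). -/
def rootCyc (f : ZMod (t+1) → Fin n) : ZMod (s+1) → Fin n :=
  fun j => f ((j.val : ZMod (t+1)))

lemma rootCyc_eq (f : ZMod (t+1) → Fin n) (hper : perN f (s+1)) (i : ZMod (t+1)) :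
    f i = rootCyc (s := s) f (pr t s i) := by
  unfold rootCyc
  have h2 : (pr t s i).val = i.val % (s+1) := ZMod.val_natCast _ _
  rw [h2]
  conv_lhs => rw [← natCast_val_self i, ← Nat.mod_add_div' i.val (s+1)]
  rw [Nat.cast_add, Nat.cast_mul]
  have := perN_mul (a := s+1) hper (i.val / (s+1))
  have h4 := this ((i.val % (s+1) : ℕ) : ZMod (t+1))
  rw [Nat.cast_mul] at h4
  exact h4

lemma rootCyc_primitive (hk : t + 1 = (s + 1) * (u + 1)) (f : ZMod (t+1) → Fin n) (hmin : minPer f = s + 1) :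
    IsPrimitiveCycle (rootCyc (s := s) f) := by
  have hper : perN f (s+1) := by rw [← hmin]; exact minPer_perN f
  intro c' hstab
  have hperc : perN f c'.val := by
    intro i
    rw [rootCyc_eq f hper (i + (c'.val : ZMod (t+1))), rootCyc_eq f hper i]
    rw [pr_add hk, pr_natCast hk, natCast_val_self]
    exact hstab _
  have hdvd : (s+1) ∣ c'.val := by
    have h5 : minPer f ∣ c'.val := minPer_dvd hperc
    rw [hmin] at h5
    exact h5
  have hlt : c'.val < s + 1 := ZMod.val_lt c'
  have hv0 : c'.val = 0 := Nat.eq_zero_of_dvd_of_lt hdvd hlt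
  apply ZMod.val_injective
  rw [hv0, ZMod.val_zero]

lemma pullCyc_rootCyc (f : ZMod (t+1) → Fin n) (hper : perN f (s+1)) :
    pullCyc (t := t) (rootCyc (s := s) f) 0 = f := by
  funext i
  unfold pullCyc
  rw [add_zero, ← rootCyc_eq f hper i]
end Proj


section SpectralPart
variable {N : ℕ}

lemma mprod_eq_lprod {M : Type*} [CommMonoid M] (m : Multiset ℂ) (f : ℂ → M) :
    (m.map f).prod = (m.toList.map f).prod := by
  conv_lhs => rw [← Multiset.coe_toList m]
  rw [Multiset.map_coe, Multiset.prod_coe]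

lemma msum_eq_lsum {M : Type*} [AddCommMonoid M] (m : Multiset ℂ) (f : ℂ → M) :
    (m.map f).sum = (m.toList.map f).sum := by
  conv_lhs => rw [← Multiset.coe_toList m]
  rw [Multiset.map_coe, Multiset.sum_coe]

lemma eval_charpoly' (B : Matrix (Fin N) (Fin N) ℂ) (c : ℂ) :
    (B.charpoly).eval c = (c • (1 : Matrix (Fin N) (Fin N) ℂ) - B).det := by
  rw [Matrix.charpoly, ← Polynomial.coe_evalRingHom, RingHom.map_det]
  congr 1
  ext i j
  by_cases h : i = j
  · subst h
    simp [Matrix.charmatrix_apply_eq, Matrix.one_apply, Matrix.sub_apply]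
  · simp [Matrix.charmatrix_apply_ne _ _ _ h, Matrix.one_apply, h, Matrix.sub_apply]

lemma charpoly_card_roots (B : Matrix (Fin N) (Fin N) ℂ) :
    Multiset.card B.charpoly.roots = N := by
  rw [Polynomial.splits_iff_card_roots.mp (IsAlgClosed.splits _),
    Matrix.charpoly_natDegree_eq_dim, Fintype.card_fin]

lemma charpoly_fact (B : Matrix (Fin N) (Fin N) ℂ) :
    B.charpoly = (B.charpoly.roots.map (fun a => X - C a)).prod :=
  (IsAlgClosed.splits _).eq_prod_roots_of_monic (Matrix.charpoly_monic B)

lemma eval_charpoly_roots (B : Matrix (Fin N) (Fin N) ℂ) (c : ℂ) :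
    (B.charpoly).eval c = (B.charpoly.roots.map (fun a => c - a)).prod := by
  conv_lhs => rw [charpoly_fact B]
  rw [Polynomial.eval_multiset_prod, Multiset.map_map]
  refine congrArg _ (Multiset.map_congr rfl fun a _ => ?_)
  simp

lemma det_one_sub_eq_roots (B : Matrix (Fin N) (Fin N) ℂ) :
    (1 - B).det = (B.charpoly.roots.map (fun a => 1 - a)).prod := by
  have h := eval_charpoly_roots B 1
  rw [eval_charpoly' B 1, one_smul] at h
  exact h

lemma multiset_prod_map_swap (m R : Multiset ℂ) (g : ℂ → ℂ → ℂ) :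
    (m.map (fun a => (R.map (g a)).prod)).prod
      = (R.map (fun b => (m.map (fun a => g a b)).prod)).prod := by
  induction m using Multiset.induction with
  | empty => simp
  | cons a m ih =>
      simp only [Multiset.map_cons, Multiset.prod_cons, ih, ← Multiset.prod_map_mul]

lemma multiset_prod_map_mul_const (m : Multiset ℂ) (c : ℂ) (g : ℂ → ℂ) :
    (m.map (fun a => c * g a)).prod = c ^ (Multiset.card m) * (m.map g).prod := by
  rw [show (fun a => c * g a) = (fun a => (fun _ => c) a * g a) from rfl,
    Multiset.prod_map_mul]
  congr 1
  rw [Multiset.map_const', Multiset.prod_replicate]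

lemma charpoly_pow (B : Matrix (Fin N) (Fin N) ℂ) (k : ℕ) :
    (B^(k+1)).charpoly
      = ((B.charpoly.roots.map (fun a => a^(k+1))).map (fun b => X - C b)).prod := by
  set R := B.charpoly.roots with hR
  have hcard : Multiset.card R = N := charpoly_card_roots B
  apply Polynomial.funext
  intro c
  set q : Polynomial ℂ := X^(k+1) - C c with hq
  have hqm : q.Monic := Polynomial.monic_X_pow_sub_C c (Nat.succ_ne_zero k)
  have hqdeg : q.natDegree = k + 1 := Polynomial.natDegree_X_pow_sub_C
  have hqcard : Multiset.card q.roots = k + 1 := by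
    rw [Polynomial.splits_iff_card_roots.mp (IsAlgClosed.splits _), hqdeg]
  set m := q.roots with hm
  have hqfact : q = (m.map (fun a => X - C a)).prod :=
    (IsAlgClosed.splits _).eq_prod_roots_of_monic hqm
  have hqfactL : q = (m.toList.map (fun a => X - C a)).prod := by
    rw [hqfact, mprod_eq_lprod]
  -- evaluate q at B
  have hBq : B^(k+1) - c • 1 = (m.toList.map (fun μ => B - μ • 1)).prod := by
    have h1 : Polynomial.aeval B q = B^(k+1) - c • 1 := by
      rw [hq]
      simp [Algebra.algebraMap_eq_smul_one]
    have h2 : Polynomial.aeval B ((m.toList.map (fun a => X - C a)).prod)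
        = (m.toList.map (fun μ => B - μ • 1)).prod := by
      rw [map_list_prod, List.map_map]
      have hfun : (⇑(aeval B) ∘ fun a => X - C a) = fun μ : ℂ => B - μ • 1 := by
        funext μ
        simp [Algebra.algebraMap_eq_smul_one]
      rw [hfun]
    rw [← h1, hqfactL, h2]
  -- take determinants
  have hdet1 : (B^(k+1) - c • 1).det = (m.map (fun μ => (B - μ • 1).det)).prod := by
    rw [hBq, ← Matrix.coe_detMonoidHom, map_list_prod, List.map_map, mprod_eq_lprod]
    rfl
  have hdet2 : ∀ μ : ℂ, (B - μ • 1).det = (-1)^N * (R.map (fun a => μ - a)).prod := by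
    intro μ
    rw [← neg_sub (μ • 1) B, Matrix.det_neg, Fintype.card_fin, ← eval_charpoly' B μ,
      eval_charpoly_roots]
  have hinner : ∀ a : ℂ, (m.map (fun μ => μ - a)).prod = (-1)^(k+1) * (a^(k+1) - c) := by
    intro a
    have h4 : (m.map (fun μ => μ - a)).prod = (m.map (fun μ => (-1) * (a - μ))).prod :=
      congrArg _ (Multiset.map_congr rfl fun μ _ => by ring)
    rw [h4, multiset_prod_map_mul_const, hqcard]
    congr 1
    have h5 : (m.map (fun μ => a - μ)).prod = q.eval a := by
      conv_rhs => rw [hqfact]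
      rw [Polynomial.eval_multiset_prod, Multiset.map_map]
      refine congrArg _ (Multiset.map_congr rfl fun μ _ => ?_)
      simp
    rw [h5, hq]
    simp
  -- now compute eval c charpoly (B^(k+1))
  rw [eval_charpoly' (B^(k+1)) c]
  rw [← neg_sub (B^(k+1)) (c • 1), Matrix.det_neg, Fintype.card_fin, hdet1]
  have h7 : (m.map (fun μ => (B - μ • 1).det)).prod
      = ((-1 : ℂ)^N)^(k+1) * (m.map (fun μ => (R.map (fun a => μ - a)).prod)).prod := by
    have h7a := multiset_prod_map_mul_const m ((-1)^N) (fun μ => (R.map (fun a => μ - a)).prod)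
    rw [hqcard] at h7a
    rw [← h7a]
    exact congrArg _ (Multiset.map_congr rfl fun μ _ => hdet2 μ)
  rw [h7, multiset_prod_map_swap m R (fun μ a => μ - a)]
  have h8 : (R.map (fun a => (m.map (fun μ => μ - a)).prod)).prod
      = ((-1 : ℂ)^(k+1))^N * (R.map (fun a => a^(k+1) - c)).prod := by
    have h8a := multiset_prod_map_mul_const R ((-1)^(k+1)) (fun a => a^(k+1) - c)
    rw [hcard] at h8a
    rw [← h8a]
    exact congrArg _ (Multiset.map_congr rfl fun a _ => hinner a)
  rw [h8]
  -- RHS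
  have h9 : Polynomial.eval c (((R.map (fun a => a^(k+1))).map (fun b => X - C b)).prod)
      = (R.map (fun a => c - a^(k+1))).prod := by
    rw [Polynomial.eval_multiset_prod, Multiset.map_map, Multiset.map_map]
    refine congrArg _ (Multiset.map_congr rfl fun a _ => ?_)
    simp
  rw [h9]
  have h10 : (R.map (fun a => c - a^(k+1))).prod
      = ((-1) : ℂ)^N * (R.map (fun a => a^(k+1) - c)).prod := by
    have h11 : (R.map (fun a => c - a^(k+1))).prod
        = (R.map (fun a => (-1) * (a^(k+1) - c))).prod :=
      congrArg _ (Multiset.map_congr rfl fun a _ => by ring)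
    rw [h11, multiset_prod_map_mul_const, hcard]
  rw [h10]
  have key : ((-1 : ℂ)^N)^(k+1) * ((-1 : ℂ)^(k+1))^N = 1 := by
    rw [← pow_mul, ← pow_mul, ← pow_add]
    exact Even.neg_one_pow ⟨N*(k+1), by ring⟩
  congr 1
  rw [← mul_assoc, key, one_mul]

lemma trace_pow_roots (B : Matrix (Fin N) (Fin N) ℂ) (k : ℕ) :
    (B^(k+1)).trace = (B.charpoly.roots.map (fun a => a^(k+1))).sum := by
  rw [Matrix.trace_eq_sum_roots_charpoly, charpoly_pow B k,
    Polynomial.roots_multiset_prod_X_sub_C]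

lemma roots_norm_le (B : Matrix (Fin N) (Fin N) ℂ) {ε : ℝ}
    (hB : ∀ i j, ‖B i j‖ ≤ ε) :
    ∀ μ ∈ B.charpoly.roots, ‖μ‖ ≤ N * ε + ε := by
  intro μ hμ
  have hp : B.charpoly ≠ 0 := (Matrix.charpoly_monic B).ne_zero
  have hroot : B.charpoly.IsRoot μ := ((Polynomial.mem_roots').mp hμ).2
  have hdet : ((μ • (1 : Matrix (Fin N) (Fin N) ℂ) - B)).det = 0 := by
    rw [← eval_charpoly']
    exact hroot
  obtain ⟨v, hv0, hveq⟩ := (Matrix.exists_mulVec_eq_zero_iff).mpr hdet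
  have hBv : B.mulVec v = μ • v := by
    rw [Matrix.sub_mulVec, Matrix.smul_mulVec, Matrix.one_mulVec, sub_eq_zero] at hveq
    exact hveq.symm
  have hev : Module.End.HasEigenvalue (Matrix.toLin' B) μ :=
    Module.End.hasEigenvalue_of_hasEigenvector
      ⟨Module.End.mem_eigenspace_iff.mpr (by rw [Matrix.toLin'_apply, hBv]), hv0⟩
  obtain ⟨i, hball⟩ := eigenvalue_mem_ball hev
  have h1 : ‖μ - B i i‖ ≤ ∑ j ∈ Finset.univ.erase i, ‖B i j‖ := by
    rw [Metric.mem_closedBall] at hball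
    rw [← dist_eq_norm]
    exact hball
  have h2 : ∑ j ∈ Finset.univ.erase i, ‖B i j‖ ≤ N * ε := by
    have h3 : ∑ j ∈ Finset.univ.erase i, ‖B i j‖ ≤ (Finset.univ.erase i).card • ε :=
      Finset.sum_le_card_nsmul _ _ ε (fun j _ => hB i j)
    have h4 : (Finset.univ.erase i).card ≤ N := by
      calc (Finset.univ.erase i).card ≤ (Finset.univ : Finset (Fin N)).card :=
            Finset.card_le_card (Finset.erase_subset _ _)
        _ = N := by rw [Finset.card_univ, Fintype.card_fin]
    calc ∑ j ∈ Finset.univ.erase i, ‖B i j‖ ≤ (Finset.univ.erase i).card • ε := h3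
      _ ≤ N • ε := by
          have hε0 : 0 ≤ ε := le_trans (norm_nonneg _) (hB i i)
          exact nsmul_le_nsmul_left hε0 h4
      _ = N * ε := by rw [nsmul_eq_mul]
  calc ‖μ‖ = ‖(μ - B i i) + B i i‖ := by ring_nf
    _ ≤ ‖μ - B i i‖ + ‖B i i‖ := norm_add_le _ _
    _ ≤ N * ε + ε := add_le_add (le_trans h1 h2) (hB i i)

lemma hasSum_neg_log_shift {a : ℂ} (ha : ‖a‖ < 1) :
    HasSum (fun k : ℕ => a^(k+1)/(((k+1 : ℕ)) : ℂ)) (-Complex.log (1 - a)) := by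
  have h := Complex.hasSum_taylorSeries_neg_log ha
  refine (hasSum_nat_add_iff (f := fun n : ℕ => a^n/((n : ℕ) : ℂ)) 1).mpr ?_
  simpa using h

lemma one_sub_ne_zero_of_norm_lt {a : ℂ} (ha : ‖a‖ < 1) : 1 - a ≠ 0 := by
  intro h
  have : a = 1 := by linear_combination -h
  rw [this] at ha
  simp at ha

lemma hasSum_list (l : List ℂ) (hl : ∀ a ∈ l, ‖a‖ < 1) :
    HasSum (fun k : ℕ => (l.map (fun a => a^(k+1)/(((k+1 : ℕ)) : ℂ))).sum)
      (-(l.map (fun a => Complex.log (1 - a))).sum) := by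
  induction l with
  | nil => simpa using hasSum_zero
  | cons a l ih =>
      have h1 := hasSum_neg_log_shift (hl a List.mem_cons_self)
      have h2 := ih (fun b hb => hl b (List.mem_cons_of_mem a hb))
      have h3 := h1.add h2
      simp only [List.map_cons, List.sum_cons, neg_add]
      exact h3

lemma exp_list_log (l : List ℂ) (hl : ∀ a ∈ l, ‖a‖ < 1) :
    Complex.exp ((l.map (fun a => Complex.log (1 - a))).sum) = (l.map (fun a => 1 - a)).prod := by
  induction l with
  | nil => simp
  | cons a l ih =>
      simp only [List.map_cons, List.sum_cons, List.prod_cons, Complex.exp_add]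
      rw [Complex.exp_log (one_sub_ne_zero_of_norm_lt (hl a List.mem_cons_self)),
        ih (fun b hb => hl b (List.mem_cons_of_mem a hb))]

lemma list_sum_div (l : List ℂ) (d : ℂ) : l.sum / d = (l.map (fun x => x / d)).sum := by
  induction l with
  | nil => simp
  | cons a l ih => simp [add_div, ih]

lemma det_one_sub_eq_exp (B : Matrix (Fin N) (Fin N) ℂ)
    (hroots : ∀ μ ∈ B.charpoly.roots, ‖μ‖ < 1) :
    ∃ SC : ℂ, HasSum (fun k : ℕ => (B^(k+1)).trace/(((k+1 : ℕ)) : ℂ)) SC ∧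
      (1 - B).det = Complex.exp (-SC) := by
  set l := B.charpoly.roots.toList with hldef
  have hl : ∀ a ∈ l, ‖a‖ < 1 := fun a ha => hroots a (by rwa [← Multiset.mem_toList])
  have hterm : ∀ k : ℕ, (B^(k+1)).trace/(((k+1 : ℕ)) : ℂ)
      = (l.map (fun a => a^(k+1)/(((k+1 : ℕ)) : ℂ))).sum := by
    intro k
    rw [trace_pow_roots B k, msum_eq_lsum, list_sum_div, List.map_map]
    rfl
  refine ⟨-(l.map (fun a => Complex.log (1 - a))).sum, ?_, ?_⟩
  · have h := hasSum_list l hl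
    simp only [hterm]
    exact h
  · rw [neg_neg, exp_list_log l hl, det_one_sub_eq_roots, mprod_eq_lprod]

section RealTransfer
variable {n : ℕ}

lemma trace_map_pow (A : Matrix (Fin n) (Fin n) ℝ) (k : ℕ) :
    ((Complex.ofRealHom.mapMatrix A : Matrix (Fin n) (Fin n) ℂ)^(k+1)).trace
      = (((A^(k+1)).trace : ℝ) : ℂ) := by
  rw [← map_pow]
  show Matrix.trace (Matrix.map (A^(k+1)) Complex.ofRealHom) = _
  rw [Matrix.trace, Matrix.trace]
  push_cast
  refine Finset.sum_congr rfl fun i _ => ?_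
  rfl

lemma real_det_exp (A : Matrix (Fin n) (Fin n) ℝ) {S : ℝ}
    (hS : HasSum (fun k : ℕ => (A^(k+1)).trace/(((k+1 : ℕ)) : ℝ)) S)
    (hroots : ∀ μ ∈ (Complex.ofRealHom.mapMatrix A :
        Matrix (Fin n) (Fin n) ℂ).charpoly.roots, ‖μ‖ < 1) :
    (1 - A).det = Real.exp (-S) := by
  set B : Matrix (Fin n) (Fin n) ℂ := Complex.ofRealHom.mapMatrix A with hB
  obtain ⟨SC, hSC, hdet⟩ := det_one_sub_eq_exp B hroots
  have hS' : HasSum (fun k : ℕ => (B^(k+1)).trace/(((k+1 : ℕ)) : ℂ)) ((S : ℝ) : ℂ) := by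
    rw [← Complex.hasSum_ofReal] at hS
    refine hS.congr_fun fun k => ?_
    rw [trace_map_pow]
    push_cast
    ring
  have hSCeq : SC = ((S : ℝ) : ℂ) := hSC.unique hS'
  have hdet2 : (((1 - A).det : ℝ) : ℂ) = ((Real.exp (-S) : ℝ) : ℂ) := by
    have h0 : (((1 - A).det : ℝ) : ℂ) = (Complex.ofRealHom.mapMatrix (1 - A)).det :=
      RingHom.map_det Complex.ofRealHom (1 - A)
    rw [h0]
    have h1 : Complex.ofRealHom.mapMatrix (1 - A) = 1 - B := by
      rw [map_sub, _root_.map_one]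
    rw [h1, hdet, hSCeq]
    rw [show -((S : ℝ) : ℂ) = (((-S : ℝ)) : ℂ) by push_cast; ring]
    rw [← Complex.ofReal_exp]
  exact_mod_cast hdet2
end RealTransfer

end SpectralPart
section Bridge
variable {n t s u : ℕ}

lemma pullCyc_rot (hk : t + 1 = (s + 1) * (u + 1)) {g g' : ZMod (s+1) → Fin n}
    {c c' : ZMod (s+1)} (h : pullCyc (t := t) g c = pullCyc (t := t) g' c') :
    (fun y => g (y + (c - c'))) = g' := by
  have hpt : ∀ j : ZMod (s+1), g (j + c) = g' (j + c') := by
    intro j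
    have h1 := congrFun h ((j.val : ZMod (t+1)))
    unfold pullCyc at h1
    rw [pr_val_cast hk] at h1
    exact h1
  funext y
  have := hpt (y - c')
  rw [sub_add_cancel] at this
  rw [← this]
  congr 1
  ring

lemma real_hasSum_neg_log {x : ℝ} (hx : |x| < 1) :
    HasSum (fun k : ℕ => x^(k+1)/(((k+1 : ℕ)) : ℝ)) (-Real.log (1 - x)) := by
  have hx' : ‖(x : ℂ)‖ < 1 := by rwa [Complex.norm_real, Real.norm_eq_abs]
  have h := hasSum_neg_log_shift hx'
  have h2 : -Complex.log (1 - (x:ℂ)) = (((-Real.log (1 - x) : ℝ)) : ℂ) := by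
    have hpos : (0:ℝ) ≤ 1 - x := by
      have := abs_lt.mp hx
      linarith
    rw [Complex.ofReal_neg, Complex.ofReal_log hpos]
    push_cast
    ring_nf
  rw [h2] at h
  rw [← Complex.hasSum_ofReal]
  refine h.congr_fun fun k => ?_
  push_cast
  ring

lemma hasProd_exp {ι : Type*} {f : ι → ℝ} {a : ℝ} (hf : HasSum f a) :
    HasProd (fun i => Real.exp (f i)) (Real.exp a) := by
  unfold HasProd
  have h1 : (fun s : Finset ι => ∏ i ∈ s, Real.exp (f i))
      = (fun y => Real.exp y) ∘ (fun s : Finset ι => ∑ i ∈ s, f i) := by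
    funext s
    rw [Function.comp_apply, Real.exp_sum]
  rw [h1]
  exact (Real.continuous_exp.continuousAt.tendsto).comp hf
end Bridge

section CycE
variable {n : ℕ}

/-- The reindexing map sending (primitive cycle class rep `g` of length `s+1`,
multiplicity `u+1`, rotation `c`) to the corresponding cycle of length `(s+1)*(u+1)`. -/
def cycE (P : (t : ℕ) → Finset (ZMod (t+1) → Fin n)) :
    ((q : ((t : ℕ) × {f // f ∈ P t}) × ℕ) × ZMod (q.1.1 + 1)) →
      ((t : ℕ) × (ZMod (t+1) → Fin n)) :=
  fun z => ⟨z.1.1.1 * z.1.2 + z.1.1.1 + z.1.2,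
    pullCyc (t := z.1.1.1 * z.1.2 + z.1.1.1 + z.1.2)
      (z.1.1.2 : ZMod (z.1.1.1 + 1) → Fin n) z.2⟩

lemma cycE_bijective (P : (t : ℕ) → Finset (ZMod (t+1) → Fin n))
    (hPprim : ∀ t, ∀ g ∈ P t, IsPrimitiveCycle g)
    (hPuniq : ∀ t, ∀ f : ZMod (t + 1) → Fin n, IsPrimitiveCycle f →
      ∃! g, g ∈ P t ∧ ∃ c : ZMod (t + 1), (fun i => f (i + c)) = g) :
    Function.Bijective (cycE P) := by
  constructor
  · rintro ⟨⟨⟨s, g⟩, u⟩, c⟩ ⟨⟨⟨s', g'⟩, u'⟩, c'⟩ h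
    have h' : (⟨s*u+s+u, pullCyc (t := s*u+s+u) g.val c⟩ :
          (t : ℕ) × (ZMod (t+1) → Fin n))
        = ⟨s'*u'+s'+u', pullCyc (t := s'*u'+s'+u') g'.val c'⟩ := h
    have hfst : s*u+s+u = s'*u'+s'+u' := congrArg Sigma.fst h'
    have hM := congrArg (fun x : (t : ℕ) × (ZMod (t+1) → Fin n) => minPer x.2) h'
    simp only [] at hM
    have hk1 : (s*u+s+u) + 1 = (s+1)*(u+1) := by ring
    have hk2 : (s'*u'+s'+u') + 1 = (s'+1)*(u'+1) := by ring
    rw [minPer_pullCyc hk1 (hPprim s g.val g.prop) c,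
      minPer_pullCyc hk2 (hPprim s' g'.val g'.prop) c'] at hM
    have hs : s = s' := by omega
    subst hs
    have hu : u = u' := by
      have h9 : (s+1)*(u+1) = (s+1)*(u'+1) := by
        calc (s+1)*(u+1) = s*u+s+u+1 := by ring
          _ = s*u'+s+u'+1 := by rw [hfst]
          _ = (s+1)*(u'+1) := by ring
      have := Nat.eq_of_mul_eq_mul_left (Nat.succ_pos s) h9
      omega
    subst hu
    have h2 : pullCyc (t := s*u+s+u) g.val c = pullCyc (t := s*u+s+u) g'.val c' := by
      have h4 := (Sigma.ext_iff.mp h').2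
      exact eq_of_heq h4
    have hrot := pullCyc_rot hk1 h2
    obtain ⟨w, hw, huni⟩ := hPuniq s g.val (hPprim s g.val g.prop)
    have e1 : g.val = w := huni g.val ⟨g.prop, 0, by funext i; rw [add_zero]⟩
    have e2 : g'.val = w := huni g'.val ⟨g'.prop, c - c', hrot⟩
    have hgg : g.val = g'.val := e1.trans e2.symm
    have hrot2 : (fun y => g.val (y + (c - c'))) = g.val := by rw [hrot]; exact hgg.symm
    have hd0 : c - c' = 0 := hPprim s g.val g.prop (c - c') (fun i => congrFun hrot2 i)
    have hcc : c = c' := by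
      have := sub_eq_zero.mp hd0
      exact this
    have hggsub : g = g' := Subtype.ext hgg
    subst hggsub
    subst hcc
    rfl
  · rintro ⟨t, f⟩
    obtain ⟨s, hs⟩ : ∃ s, minPer f = s + 1 := ⟨minPer f - 1, by have := minPer_pos f; omega⟩
    have hdvd : (s+1) ∣ (t+1) := by
      have := minPer_dvd_len f
      rwa [hs] at this
    obtain ⟨m, hm⟩ := hdvd
    have hmpos : 0 < m := by
      rcases Nat.eq_zero_or_pos m with rfl | h
      · rw [Nat.mul_zero] at hm
        exact absurd hm (Nat.succ_ne_zero t)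
      · exact h
    obtain ⟨u, hu⟩ : ∃ u, m = u + 1 := ⟨m - 1, by omega⟩
    have hk : t + 1 = (s+1)*(u+1) := by rw [hm, hu]
    have hper : perN f (s+1) := by
      have := minPer_perN f
      rwa [hs] at this
    have hg0prim : IsPrimitiveCycle (rootCyc (s := s) f) := rootCyc_primitive hk f hs
    obtain ⟨w, ⟨hwP, c, hc⟩, -⟩ := hPuniq s (rootCyc (s := s) f) hg0prim
    refine ⟨⟨⟨⟨s, ⟨w, hwP⟩⟩, u⟩, -c⟩, ?_⟩
    have ht : s*u+s+u = t := by
      have h9 : (s+1)*(u+1) = s*u+s+u+1 := by ring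
      omega
    subst ht
    have hfun : pullCyc (t := s*u+s+u) w (-c) = f := by
      funext i
      show w (pr (s*u+s+u) s i + -c) = f i
      have h1 : w (pr (s*u+s+u) s i + -c)
          = rootCyc (s := s) f ((pr (s*u+s+u) s i + -c) + c) := (congrFun hc _).symm
      rw [h1, neg_add_cancel_right]
      exact (rootCyc_eq f hper i).symm
    show (⟨s*u+s+u, pullCyc (t := s*u+s+u) w (-c)⟩ : (t : ℕ) × (ZMod (t+1) → Fin n))
      = ⟨s*u+s+u, f⟩
    rw [hfun]
end CycE

set_option maxHeartbeats 1000000 in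
/-- Primitive cycle product formula: for sufficiently small `A`, and any choice
`P` of exactly one representative from each rotation class of primitive labeled
cycle graphs (of each length `t ≥ 1`),
`det(I - A) = Π_{γ_ρ} (1 - w₁(γ_ρ))`. -/
theorem primitive_cycle_product (n : ℕ) :
    ∃ ε > (0 : ℝ), ∀ A : Matrix (Fin n) (Fin n) ℝ, (∀ i j, |A i j| < ε) →
      ∀ P : (t : ℕ) → Finset (ZMod (t + 1) → Fin n),
        (∀ t, ∀ g ∈ P t, IsPrimitiveCycle g) →
        (∀ t, ∀ f : ZMod (t + 1) → Fin n, IsPrimitiveCycle f →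
          ∃! g, g ∈ P t ∧ ∃ c : ZMod (t + 1), (fun i => f (i + c)) = g) →
        Matrix.det (1 - A)
          = ∏' p : (t : ℕ) × {f // f ∈ P t}, (1 - cycWeight A (p.2 : ZMod (p.1 + 1) → Fin n)) := by
  set ε : ℝ := 1/(2*((n:ℝ)+1)^2) with hεdef
  have hn0 : (0:ℝ) ≤ (n:ℝ) := Nat.cast_nonneg n
  have hε0 : 0 < ε := by rw [hεdef]; positivity
  have hεle : ε ≤ 1/2 := by
    rw [hεdef, div_le_div_iff₀ (by positivity) (by norm_num)]
    nlinarith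
  have hnε : (n:ℝ) * ε ≤ 1/2 := by
    rw [hεdef, mul_one_div, div_le_div_iff₀ (by positivity) (by norm_num)]
    nlinarith
  have hn1ε : (n:ℝ) * ε + ε < 1 := by
    have h1 : (n:ℝ) * ε + ε = ((n:ℝ)+1) * ε := by ring
    rw [h1, hεdef, mul_one_div, div_lt_one (by positivity)]
    nlinarith
  refine ⟨ε, hε0, fun A hA P hPprim hPuniq => ?_⟩
  -- individual weight bounds
  have hwb : ∀ (t : ℕ) (f : ZMod (t+1) → Fin n), |cycWeight A f| ≤ ε^(t+1) := by
    intro t f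
    rw [cycWeight, Finset.abs_prod]
    calc ∏ i : ZMod (t+1), |A (f i) (f (i+1))| ≤ ∏ _i : ZMod (t+1), ε :=
          Finset.prod_le_prod (fun i _ => abs_nonneg _) (fun i _ => le_of_lt (hA _ _))
      _ = ε^(t+1) := by rw [Finset.prod_const, Finset.card_univ, ZMod.card]
  have hεpow : ∀ t : ℕ, ε^(t+1) ≤ ε := by
    intro t
    have h2 := pow_le_pow_of_le_one (le_of_lt hε0) (le_trans hεle (by norm_num))
      (Nat.le_add_left 1 t)
    simpa using h2
  have hwlt : ∀ (t : ℕ) (f : ZMod (t+1) → Fin n), |cycWeight A f| < 1 :=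
    fun t f => lt_of_le_of_lt (le_trans (hwb t f) (hεpow t)) (by linarith)
  -- the weight function on the sigma type of all cycles
  set wS : ((t : ℕ) × (ZMod (t+1) → Fin n)) → ℝ :=
    fun x => cycWeight A x.2 / (((x.1+1 : ℕ)) : ℝ) with hwSdef
  have hwS_le : ∀ x : ((t : ℕ) × (ZMod (t+1) → Fin n)), |wS x| ≤ ε^(x.1+1) := by
    rintro ⟨t, f⟩
    rw [hwSdef]
    show |cycWeight A f / (((t+1 : ℕ)) : ℝ)| ≤ ε^(t+1)
    rw [abs_div, abs_of_pos (show (0:ℝ) < ((t+1 : ℕ) : ℝ) by positivity)]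
    calc |cycWeight A f| / ((t+1 : ℕ) : ℝ) ≤ |cycWeight A f| :=
          div_le_self (abs_nonneg _) (by exact_mod_cast Nat.one_le_iff_ne_zero.mpr (Nat.succ_ne_zero t))
      _ ≤ ε^(t+1) := hwb t f
  -- summability over all cycles
  have hXabs : Summable (fun x : (t : ℕ) × (ZMod (t+1) → Fin n) => |wS x|) := by
    refine (summable_sigma_of_nonneg (fun x => abs_nonneg _)).mpr ⟨fun t => Summable.of_finite, ?_⟩
    have hgeom : Summable (fun t : ℕ => ((1:ℝ)/2)^(t+1)) := by
      refine (summable_geometric_two.mul_right (1/2)).congr fun t => ?_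
      rw [← pow_succ]
    refine Summable.of_nonneg_of_le (fun t => tsum_nonneg fun f => abs_nonneg _)
      (fun t => ?_) hgeom
    rw [tsum_fintype]
    have hcard : (Finset.univ : Finset (ZMod (t+1) → Fin n)).card = n^(t+1) := by
      rw [Finset.card_univ, Fintype.card_fun, ZMod.card, Fintype.card_fin]
    calc ∑ f : ZMod (t+1) → Fin n, |wS ⟨t, f⟩|
        ≤ (Finset.univ : Finset (ZMod (t+1) → Fin n)).card • ε^(t+1) :=
          Finset.sum_le_card_nsmul _ _ _ (fun f _ => hwS_le ⟨t, f⟩)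
      _ = ((n^(t+1) : ℕ) : ℝ) * ε^(t+1) := by rw [hcard, nsmul_eq_mul]
      _ = ((n:ℝ) * ε)^(t+1) := by rw [mul_pow]; push_cast; ring
      _ ≤ ((1:ℝ)/2)^(t+1) := pow_le_pow_left₀ (by positivity) hnε _
  have hX : Summable wS := hXabs.of_abs
  set S : ℝ := ∑' x, wS x with hSdef
  have hSsum : HasSum wS S := hX.hasSum
  -- trace sums
  have htr : HasSum (fun k : ℕ => (A^(k+1)).trace/(((k+1:ℕ)):ℝ)) S := by
    refine HasSum.sigma hSsum fun t => ?_
    have h1 : HasSum (fun f : ZMod (t+1) → Fin n => wS ⟨t, f⟩)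
        (∑ f : ZMod (t+1) → Fin n, wS ⟨t, f⟩) := hasSum_fintype _
    have h2 : (∑ f : ZMod (t+1) → Fin n, wS ⟨t, f⟩) = (A^(t+1)).trace/(((t+1:ℕ)):ℝ) := by
      rw [trace_pow A t, Finset.sum_div]
    rwa [h2] at h1
  -- eigenvalue bound and determinant formula
  have hroots : ∀ μ ∈ (Complex.ofRealHom.mapMatrix A :
      Matrix (Fin n) (Fin n) ℂ).charpoly.roots, ‖μ‖ < 1 := by
    intro μ hμ
    have hb : ∀ i j, ‖(Complex.ofRealHom.mapMatrix A : Matrix (Fin n) (Fin n) ℂ) i j‖ ≤ ε := by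
      intro i j
      rw [RingHom.mapMatrix_apply, Matrix.map_apply]
      show ‖((A i j : ℝ) : ℂ)‖ ≤ ε
      rw [Complex.norm_real, Real.norm_eq_abs]
      exact le_of_lt (hA i j)
    exact lt_of_le_of_lt (roots_norm_le _ hb μ hμ) hn1ε
  have hdetS : (1 - A).det = Real.exp (-S) := real_det_exp A htr hroots
  -- reindex over primitive classes
  have hbij := cycE_bijective P hPprim hPuniq
  set eE := Equiv.ofBijective (cycE P) hbij with heEdef
  have hSz : ∑' z, wS (cycE P z) = S := Equiv.tsum_eq eE wS
  have hZabs : Summable (fun z => |wS (cycE P z)|) := by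
    have h1 : (fun z => |wS (cycE P z)|) = (fun x => |wS x|) ∘ eE := rfl
    rw [h1]
    exact eE.summable_iff.mpr hXabs
  have hZsum : Summable (fun z => wS (cycE P z)) := hZabs.of_abs
  -- the collapsed weight over (class, multiplicity)
  set wq : (((t : ℕ) × {f // f ∈ P t}) × ℕ) → ℝ :=
    fun q => (cycWeight A (q.1.2 : ZMod (q.1.1+1) → Fin n))^(q.2+1) / (((q.2+1 : ℕ)) : ℝ)
    with hwqdef
  have hEval : ∀ (q : ((t : ℕ) × {f // f ∈ P t}) × ℕ) (c : ZMod (q.1.1+1)),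
      wS (cycE P ⟨q, c⟩) = (cycWeight A (q.1.2 : ZMod (q.1.1+1) → Fin n))^(q.2+1)
        / ((((q.1.1+1)*(q.2+1) : ℕ)) : ℝ) := by
    rintro ⟨⟨s, g⟩, u⟩ c
    show cycWeight A (pullCyc (t := s*u+s+u) g.val c) / (((s*u+s+u+1 : ℕ)) : ℝ) = _
    rw [weight_pullCyc (by ring : (s*u+s+u) + 1 = (s+1)*(u+1)) A g.val c]
    norm_num
    congr 2
    ring
  have hInner : ∀ q : ((t : ℕ) × {f // f ∈ P t}) × ℕ,
      ∑' c : ZMod (q.1.1+1), wS (cycE P ⟨q, c⟩) = wq q := by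
    rintro ⟨⟨s, g⟩, u⟩
    rw [tsum_fintype]
    rw [Finset.sum_congr rfl (fun c _ => hEval (⟨s, g⟩, u) c)]
    rw [Finset.sum_const, Finset.card_univ, ZMod.card, nsmul_eq_mul]
    rw [hwqdef]
    show ((s+1 : ℕ) : ℝ) * ((cycWeight A g.val)^(u+1) / ((((s+1)*(u+1) : ℕ)) : ℝ))
      = (cycWeight A g.val)^(u+1) / (((u+1 : ℕ)) : ℝ)
    push_cast
    have hs0 : ((s:ℝ)+1) ≠ 0 := by positivity
    have hu0 : ((u:ℝ)+1) ≠ 0 := by positivity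
    field_simp
  have hInnerAbs : ∀ q : ((t : ℕ) × {f // f ∈ P t}) × ℕ,
      ∑' c : ZMod (q.1.1+1), |wS (cycE P ⟨q, c⟩)| = |wq q| := by
    rintro ⟨⟨s, g⟩, u⟩
    rw [tsum_fintype]
    rw [Finset.sum_congr rfl (fun c _ => congrArg abs (hEval (⟨s, g⟩, u) c))]
    rw [Finset.sum_const, Finset.card_univ, ZMod.card, nsmul_eq_mul]
    rw [hwqdef]
    show ((s+1 : ℕ) : ℝ) * |(cycWeight A g.val)^(u+1) / ((((s+1)*(u+1) : ℕ)) : ℝ)|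
      = |(cycWeight A g.val)^(u+1) / (((u+1 : ℕ)) : ℝ)|
    rw [abs_div, abs_div,
      abs_of_pos (show (0:ℝ) < (((s+1)*(u+1) : ℕ) : ℝ) by positivity),
      abs_of_pos (show (0:ℝ) < ((u+1 : ℕ) : ℝ) by positivity)]
    push_cast
    have hs0 : ((s:ℝ)+1) ≠ 0 := by positivity
    have hu0 : ((u:ℝ)+1) ≠ 0 := by positivity
    field_simp
  have hwqAbsSummable : Summable (fun q => |wq q|) := by
    have h1 := ((summable_sigma_of_nonneg (fun z => abs_nonneg _)).mp hZabs).2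
    exact h1.congr fun q => hInnerAbs q
  have hwqSummable : Summable wq := hwqAbsSummable.of_abs
  have hSq : S = ∑' q, wq q := by
    rw [← hSz, Summable.tsum_sigma hZsum]
    exact tsum_congr fun q => hInner q
  have hSplit : S = ∑' γ : (t : ℕ) × {f // f ∈ P t}, ∑' u : ℕ, wq (γ, u) := by
    rw [hSq, Summable.tsum_prod hwqSummable]
  -- log series per class
  have hlog : ∀ γ : (t : ℕ) × {f // f ∈ P t}, HasSum (fun u : ℕ => wq (γ, u))
      (-Real.log (1 - cycWeight A (γ.2 : ZMod (γ.1+1) → Fin n))) := by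
    intro γ
    have h0 : (fun u : ℕ => wq (γ, u)) = fun u : ℕ =>
        (cycWeight A (γ.2 : ZMod (γ.1+1) → Fin n))^(u+1) / (((u+1 : ℕ)) : ℝ) := by
      funext u
      rw [hwqdef]
    rw [h0]
    exact real_hasSum_neg_log (hwlt _ _)
  have hYabs : Summable (fun γ : (t : ℕ) × {f // f ∈ P t} => ∑' u : ℕ, |wq (γ, u)|) :=
    ((summable_prod_of_nonneg (fun q => abs_nonneg _)).mp hwqAbsSummable).2
  have hwqrow : ∀ γ : (t : ℕ) × {f // f ∈ P t}, Summable (fun u : ℕ => |wq (γ, u)|) :=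
    fun γ => ((summable_prod_of_nonneg (fun q => abs_nonneg _)).mp hwqAbsSummable).1 γ
  have hLabs : Summable (fun γ : (t : ℕ) × {f // f ∈ P t} =>
      |Real.log (1 - cycWeight A (γ.2 : ZMod (γ.1+1) → Fin n))|) := by
    refine Summable.of_nonneg_of_le (fun γ => abs_nonneg _) (fun γ => ?_) hYabs
    have h1 := (hlog γ).tsum_eq
    have h2 : |Real.log (1 - cycWeight A (γ.2 : ZMod (γ.1+1) → Fin n))|
        = |∑' u : ℕ, wq (γ, u)| := by rw [h1, abs_neg]
    rw [h2]
    have h3 := norm_tsum_le_tsum_norm (f := fun u : ℕ => wq (γ, u))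
      (by simpa [Real.norm_eq_abs] using hwqrow γ)
    simpa [Real.norm_eq_abs] using h3
  have hLsummable : Summable (fun γ : (t : ℕ) × {f // f ∈ P t} =>
      Real.log (1 - cycWeight A (γ.2 : ZMod (γ.1+1) → Fin n))) := hLabs.of_abs
  have hLsum : HasSum (fun γ : (t : ℕ) × {f // f ∈ P t} =>
      Real.log (1 - cycWeight A (γ.2 : ZMod (γ.1+1) → Fin n))) (-S) := by
    have h1 := hLsummable.hasSum
    have h2 : ∑' γ : (t : ℕ) × {f // f ∈ P t},
        Real.log (1 - cycWeight A (γ.2 : ZMod (γ.1+1) → Fin n)) = -S := by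
      rw [hSplit, ← tsum_neg]
      exact tsum_congr fun γ => by rw [(hlog γ).tsum_eq, neg_neg]
    rwa [h2] at h1
  -- product
  have hProd : HasProd (fun γ : (t : ℕ) × {f // f ∈ P t} =>
      1 - cycWeight A (γ.2 : ZMod (γ.1+1) → Fin n)) (Real.exp (-S)) := by
    have h1 := hasProd_exp hLsum
    have h2 : (fun γ : (t : ℕ) × {f // f ∈ P t} =>
        Real.exp (Real.log (1 - cycWeight A (γ.2 : ZMod (γ.1+1) → Fin n))))
        = fun γ : (t : ℕ) × {f // f ∈ P t} =>
            1 - cycWeight A (γ.2 : ZMod (γ.1+1) → Fin n) := by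
      funext γ
      refine Real.exp_log ?_
      have h3 := abs_lt.mp (hwlt _ (γ.2 : ZMod (γ.1+1) → Fin n))
      linarith [h3.2]
    rwa [h2] at h1
  rw [hdetS]
  exact hProd.tprod_eq.symm
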